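/- arXiv:1805.04305 — 2 statements merged into one kernel-verified Lean document; each statement's English description precedes it below -/
import Mathlib

section
/- (Closeness of the modified energy to the true energy.) Assume |ψ₁(ξ)| ≤ c₀, |φ(ξ)| ≤ c₀ and |φ(ξ) − 1| ≤ c₁|ξ| for all ξ ∈ ℝ. Let ω be the smallest nonzero frequency among the ω_j (assume at least one ω_j ≠ 0). Then for all q, q̇ ∈ ℂ^d and 0 < h ≤ 1: |ℋ(q, q̇) − H(q, q̇)| ≤ C̃ min(h, ω^{-1}) ‖q‖ ‖Ω q‖ + Ĉ h² ‖q‖², where C̃ = (1/2)(2c₀² + (c₀+1) max(c₀+1, c₁))‖A‖ and Ĉ = (1/8) c₀⁴ ‖A‖². -/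
open scoped BigOperators

/-- `sinc ξ = sin ξ / ξ` with `sinc 0 = 1`. -/
noncomputable def sinc (x : ℝ) : ℝ := if x = 0 then 1 else Real.sin x / x

/-- Entrywise (diagonal-matrix) action of a real function family on `ℂ^d`. -/
noncomputable def dOp {d : ℕ} (f : Fin d → ℝ) (q : EuclideanSpace ℂ (Fin d)) :
    EuclideanSpace ℂ (Fin d) := WithLp.toLp 2 (fun i => (f i : ℂ) * q i)

/-- Position update of the trigonometric integrator for the linear force `g(q) = -A q`:
`q_{n+1} = cos(hΩ) q_n + h sinc(hΩ) q̇_n + ½h² sinc(hΩ) Ψ₁ g(Φ q_n)`. -/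
noncomputable def trigStepQ {d : ℕ} (h : ℝ) (ω : Fin d → ℝ) (ψ₁ φ : ℝ → ℝ)
    (A : EuclideanSpace ℂ (Fin d) →L[ℂ] EuclideanSpace ℂ (Fin d))
    (q p : EuclideanSpace ℂ (Fin d)) : EuclideanSpace ℂ (Fin d) :=
  dOp (fun i => Real.cos (h * ω i)) q + h • dOp (fun i => sinc (h * ω i)) p
    + (h ^ 2 / 2) • dOp (fun i => sinc (h * ω i))
        (dOp (fun i => ψ₁ (h * ω i)) (-(A (dOp (fun i => φ (h * ω i)) q))))

/-- Velocity update of the trigonometric integrator for the linear force `g(q) = -A q`: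
`q̇_{n+1} = -Ω sin(hΩ) q_n + cos(hΩ) q̇_n + ½h (cos(hΩ) Ψ₁ g(Φ q_n) + Ψ₁ g(Φ q_{n+1}))`. -/
noncomputable def trigStepP {d : ℕ} (h : ℝ) (ω : Fin d → ℝ) (ψ₁ φ : ℝ → ℝ)
    (A : EuclideanSpace ℂ (Fin d) →L[ℂ] EuclideanSpace ℂ (Fin d))
    (q p : EuclideanSpace ℂ (Fin d)) : EuclideanSpace ℂ (Fin d) :=
  -(dOp (fun i => ω i * Real.sin (h * ω i)) q) + dOp (fun i => Real.cos (h * ω i)) p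
    + (h / 2) • (dOp (fun i => Real.cos (h * ω i))
          (dOp (fun i => ψ₁ (h * ω i)) (-(A (dOp (fun i => φ (h * ω i)) q))))
        + dOp (fun i => ψ₁ (h * ω i))
            (-(A (dOp (fun i => φ (h * ω i)) (trigStepQ h ω ψ₁ φ A q p)))))

/-- The modified energy
`ℋ(q,q̇) = ½‖Ωq‖² + ½‖q̇‖² + ½ Re((cos(hΩ)Φq)* A Φq) − ⅛h²‖Ψ₁ A Φq‖²`. -/
noncomputable def modEnergy {d : ℕ} (h : ℝ) (ω : Fin d → ℝ) (ψ₁ φ : ℝ → ℝ)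
    (A : EuclideanSpace ℂ (Fin d) →L[ℂ] EuclideanSpace ℂ (Fin d))
    (q p : EuclideanSpace ℂ (Fin d)) : ℝ :=
  (1 / 2) * ‖dOp ω q‖ ^ 2 + (1 / 2) * ‖p‖ ^ 2
    + (1 / 2) * (inner (𝕜 := ℂ) (dOp (fun i => Real.cos (h * ω i)) (dOp (fun i => φ (h * ω i)) q))
        (A (dOp (fun i => φ (h * ω i)) q))).re
    - (1 / 8) * h ^ 2 * ‖dOp (fun i => ψ₁ (h * ω i)) (A (dOp (fun i => φ (h * ω i)) q))‖ ^ 2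

/-- The total energy `H(q,q̇) = ½‖Ωq‖² + ½‖q̇‖² + ½ q* A q` of `q̈ = -Ω²q - Aq`. -/
noncomputable def energy {d : ℕ} (ω : Fin d → ℝ)
    (A : EuclideanSpace ℂ (Fin d) →L[ℂ] EuclideanSpace ℂ (Fin d))
    (q p : EuclideanSpace ℂ (Fin d)) : ℝ :=
  (1 / 2) * ‖dOp ω q‖ ^ 2 + (1 / 2) * ‖p‖ ^ 2 + (1 / 2) * (inner (𝕜 := ℂ) q (A q)).re

lemma abs_sin_le' {x : ℝ} (hx : 0 ≤ x) : |Real.sin x| ≤ x := by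
  rcases le_or_gt x Real.pi with hp | hp
  · rw [abs_of_nonneg (Real.sin_nonneg_of_nonneg_of_le_pi hx hp)]
    exact Real.sin_le hx
  · refine le_trans (abs_le.mpr ⟨Real.neg_one_le_sin x, Real.sin_le_one x⟩) ?_
    linarith [Real.pi_gt_three]

lemma one_sub_cos_le' {x : ℝ} (hx : 0 ≤ x) : 1 - Real.cos x ≤ x := by
  have h2 : Real.cos x = 2 * Real.cos (x / 2) ^ 2 - 1 := by
    have := Real.cos_two_mul (x / 2)
    rw [mul_div_cancel₀ x (two_ne_zero)] at this
    linarith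
  have hs : Real.sin (x / 2) ^ 2 + Real.cos (x / 2) ^ 2 = 1 := Real.sin_sq_add_cos_sq _
  have h3 : |Real.sin (x / 2)| ≤ x / 2 := abs_sin_le' (by linarith)
  have h4 : |Real.sin (x / 2)| ≤ 1 := abs_le.mpr ⟨Real.neg_one_le_sin _, Real.sin_le_one _⟩
  nlinarith [sq_abs (Real.sin (x / 2)), abs_nonneg (Real.sin (x / 2)),
    mul_le_mul h3 h4 (abs_nonneg _) (by linarith : (0:ℝ) ≤ x / 2)]

lemma dOp_comp {d : ℕ} (f g : Fin d → ℝ) (q : EuclideanSpace ℂ (Fin d)) :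
    dOp f (dOp g q) = dOp (fun i => f i * g i) q := by
  ext i
  simp [dOp]
  ring

lemma dOp_sub_dOp {d : ℕ} (f g : Fin d → ℝ) (q : EuclideanSpace ℂ (Fin d)) :
    dOp f q - dOp g q = dOp (fun i => f i - g i) q := by
  ext i
  show dOp f q i - dOp g q i = _
  simp [dOp, sub_mul]

lemma dOp_sub_id {d : ℕ} (f : Fin d → ℝ) (q : EuclideanSpace ℂ (Fin d)) :
    dOp f q - q = dOp (fun i => f i - 1) q := by
  ext i
  show dOp f q i - q i = _
  simp [dOp, sub_mul]

lemma dOp_one {d : ℕ} (q : EuclideanSpace ℂ (Fin d)) :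
    dOp (fun _ => (1:ℝ)) q = q := by
  ext i
  simp [dOp]

lemma norm_dOp_apply {d : ℕ} (f : Fin d → ℝ) (q : EuclideanSpace ℂ (Fin d)) (i : Fin d) :
    ‖dOp f q i‖ = |f i| * ‖q i‖ := by
  simp only [dOp, WithLp.ofLp_toLp]
  rw [norm_mul, Complex.norm_real, Real.norm_eq_abs]

lemma norm_dOp_le {d : ℕ} (f g : Fin d → ℝ) (c : ℝ) (hc : 0 ≤ c)
    (hfg : ∀ i, |f i| ≤ c * |g i|) (q : EuclideanSpace ℂ (Fin d)) :
    ‖dOp f q‖ ≤ c * ‖dOp g q‖ := by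
  rw [EuclideanSpace.norm_eq, EuclideanSpace.norm_eq, ← Real.sqrt_sq hc,
    ← Real.sqrt_mul (sq_nonneg c)]
  apply Real.sqrt_le_sqrt
  rw [Finset.mul_sum]
  apply Finset.sum_le_sum
  intro i _
  have h1 : ‖dOp f q i‖ ≤ c * ‖dOp g q i‖ := by
    rw [norm_dOp_apply, norm_dOp_apply, ← mul_assoc]
    exact mul_le_mul_of_nonneg_right (hfg i) (norm_nonneg _)
  calc ‖dOp f q i‖ ^ 2 ≤ (c * ‖dOp g q i‖) ^ 2 := pow_le_pow_left₀ (norm_nonneg _) h1 2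
    _ = c ^ 2 * ‖dOp g q i‖ ^ 2 := by ring

lemma norm_dOp_le_const {d : ℕ} (f : Fin d → ℝ) (c : ℝ) (hc : 0 ≤ c)
    (hf : ∀ i, |f i| ≤ c) (q : EuclideanSpace ℂ (Fin d)) :
    ‖dOp f q‖ ≤ c * ‖q‖ := by
  have := norm_dOp_le f (fun _ => 1) c hc (by simpa using hf) q
  rwa [dOp_one] at this

/-- Lemma 1, second estimate: closeness of the modified energy to the true energy:
`|ℋ(q,q̇) − H(q,q̇)| ≤ C̃ min(h, ω⁻¹) ‖q‖‖Ωq‖ + Ĉ h² ‖q‖²` with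
`C̃ = ½(2c₀² + (c₀+1)max(c₀+1, c₁))‖A‖` and `Ĉ = ⅛c₀⁴‖A‖²`,
where `ω` is the smallest nonzero frequency. -/
theorem modified_energy_close_to_energy {d : ℕ} (h : ℝ) (hh0 : 0 < h) (hh1 : h ≤ 1)
    (ω : Fin d → ℝ) (hω : ∀ i, 0 ≤ ω i) (ψ₁ φ : ℝ → ℝ) (c₀ c₁ : ℝ)
    (hψ : ∀ ξ : ℝ, |ψ₁ ξ| ≤ c₀) (hφ : ∀ ξ : ℝ, |φ ξ| ≤ c₀)
    (hφ1 : ∀ ξ : ℝ, |φ ξ - 1| ≤ c₁ * |ξ|)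
    (ωmin : ℝ) (hmem : ∃ i, ω i = ωmin) (hωminpos : 0 < ωmin)
    (hmin : ∀ i, ω i ≠ 0 → ωmin ≤ ω i)
    (A : EuclideanSpace ℂ (Fin d) →L[ℂ] EuclideanSpace ℂ (Fin d))
    (hA : IsSelfAdjoint A) :
    ∀ q p : EuclideanSpace ℂ (Fin d),
      |modEnergy h ω ψ₁ φ A q p - energy ω A q p|
        ≤ (1 / 2) * (2 * c₀ ^ 2 + (c₀ + 1) * max (c₀ + 1) c₁) * ‖A‖
              * min h ωmin⁻¹ * ‖q‖ * ‖dOp ω q‖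
          + (1 / 8) * c₀ ^ 4 * ‖A‖ ^ 2 * h ^ 2 * ‖q‖ ^ 2 := by
  intro q p
  have hc₀ : 0 ≤ c₀ := le_trans (abs_nonneg _) (hψ 0)
  set m := min h ωmin⁻¹ with hm
  have hm0 : 0 ≤ m := le_min hh0.le (inv_nonneg.mpr hωminpos.le)
  set M := max (c₀ + 1) c₁ with hM
  have hM1 : c₀ + 1 ≤ M := le_max_left _ _
  have hM0 : 0 ≤ M := by linarith
  set Φq := dOp (fun i => φ (h * ω i)) q with hΦq
  set u := dOp (fun i => Real.cos (h * ω i)) Φq with hu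
  set w := dOp (fun i => ψ₁ (h * ω i)) (A Φq) with hw
  -- pointwise bounds
  have hcosbd : ∀ i, |Real.cos (h * ω i) * φ (h * ω i) - φ (h * ω i)|
      ≤ (2 * c₀ * m) * |ω i| := by
    intro i
    rcases eq_or_ne (ω i) 0 with h0 | h0
    · simp [h0]
    have hωi : ωmin ≤ ω i := hmin i h0
    have hωi0 : 0 < ω i := lt_of_lt_of_le hωminpos hωi
    have hcos : 1 - Real.cos (h * ω i) ≤ 2 * m * ω i := by
      rcases le_total h ωmin⁻¹ with hc | hc
      · rw [hm, min_eq_left hc]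
        have := one_sub_cos_le' (mul_nonneg hh0.le hωi0.le)
        nlinarith [mul_nonneg hh0.le hωi0.le]
      · rw [hm, min_eq_right hc]
        have h1 : (1:ℝ) ≤ ωmin⁻¹ * ω i := by
          rw [← inv_mul_cancel₀ hωminpos.ne']
          exact mul_le_mul_of_nonneg_left hωi (inv_nonneg.mpr hωminpos.le)
        have := Real.neg_one_le_cos (h * ω i)
        nlinarith
    calc |Real.cos (h * ω i) * φ (h * ω i) - φ (h * ω i)|
        = |Real.cos (h * ω i) - 1| * |φ (h * ω i)| := by
          rw [← abs_mul, sub_mul, one_mul]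
      _ ≤ (2 * m * ω i) * c₀ := by
          apply mul_le_mul _ (hφ _) (abs_nonneg _)
            (mul_nonneg (mul_nonneg (by norm_num) hm0) hωi0.le)
          rw [abs_sub_comm, abs_of_nonneg (by linarith [Real.cos_le_one (h * ω i)])]
          exact hcos
      _ = (2 * c₀ * m) * |ω i| := by rw [abs_of_nonneg (hω i)]; ring
  have hφbd : ∀ i, |φ (h * ω i) - 1| ≤ (M * m) * |ω i| := by
    intro i
    rcases eq_or_ne (ω i) 0 with h0 | h0
    · have h5 : φ 0 = 1 := by
        have := hφ1 0
        rw [abs_zero, mul_zero, abs_nonpos_iff, sub_eq_zero] at this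
        exact this
      simp [h0, h5]
    have hωi : ωmin ≤ ω i := hmin i h0
    have hωi0 : 0 < ω i := lt_of_lt_of_le hωminpos hωi
    rcases le_total h ωmin⁻¹ with hc | hc
    · rw [hm, min_eq_left hc, abs_of_nonneg (hω i)]
      have h6 := hφ1 (h * ω i)
      rw [abs_of_nonneg (mul_nonneg hh0.le hωi0.le)] at h6
      have hcM : c₁ ≤ M := le_max_right _ _
      nlinarith [mul_nonneg hh0.le hωi0.le]
    · rw [hm, min_eq_right hc, abs_of_nonneg (hω i)]
      have h1 : (1:ℝ) ≤ ωmin⁻¹ * ω i := by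
        rw [← inv_mul_cancel₀ hωminpos.ne']
        exact mul_le_mul_of_nonneg_left hωi (inv_nonneg.mpr hωminpos.le)
      have h3 := abs_le.mp (hφ (h * ω i))
      have h2 : |φ (h * ω i) - 1| ≤ c₀ + 1 :=
        abs_le.mpr ⟨by linarith [h3.1], by linarith [h3.2]⟩
      nlinarith
  -- norm bounds
  have hW : (0:ℝ) ≤ ‖dOp ω q‖ := norm_nonneg _
  have B1 : ‖u - Φq‖ ≤ (2 * c₀ * m) * ‖dOp ω q‖ := by
    have e1 : u - Φq = dOp (fun i => Real.cos (h * ω i) * φ (h * ω i) - φ (h * ω i)) q := by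
      rw [hu, hΦq, dOp_comp, dOp_sub_dOp]
    rw [e1]
    exact norm_dOp_le _ ω _ (mul_nonneg (mul_nonneg (by norm_num) hc₀) hm0) hcosbd q
  have B2 : ‖Φq - q‖ ≤ (M * m) * ‖dOp ω q‖ := by
    have e2 : Φq - q = dOp (fun i => φ (h * ω i) - 1) q := by rw [hΦq, dOp_sub_id]
    rw [e2]
    exact norm_dOp_le _ ω _ (mul_nonneg hM0 hm0) hφbd q
  have B3 : ‖A Φq‖ ≤ ‖A‖ * (c₀ * ‖q‖) := by
    refine le_trans (A.le_opNorm _) (mul_le_mul_of_nonneg_left ?_ (norm_nonneg A))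
    exact norm_dOp_le_const _ c₀ hc₀ (fun i => hφ _) q
  have B4 : ‖w‖ ≤ c₀ ^ 2 * ‖A‖ * ‖q‖ := by
    calc ‖w‖ ≤ c₀ * ‖A Φq‖ := norm_dOp_le_const _ c₀ hc₀ (fun i => hψ _) _
      _ ≤ c₀ * (‖A‖ * (c₀ * ‖q‖)) := mul_le_mul_of_nonneg_left B3 hc₀
      _ = c₀ ^ 2 * ‖A‖ * ‖q‖ := by ring
  -- splitting of the inner-product difference
  have hsplit : (inner (𝕜 := ℂ) u (A Φq)) - (inner (𝕜 := ℂ) q (A q))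
      = inner (𝕜 := ℂ) (u - Φq) (A Φq) + inner (𝕜 := ℂ) (Φq - q) (A Φq)
        + inner (𝕜 := ℂ) q (A (Φq - q)) := by
    rw [inner_sub_left, inner_sub_left, map_sub, inner_sub_right]
    ring
  have hz : ‖(inner (𝕜 := ℂ) u (A Φq)) - (inner (𝕜 := ℂ) q (A q))‖
      ≤ (2 * c₀ ^ 2 + (c₀ + 1) * M) * ‖A‖ * m * (‖q‖ * ‖dOp ω q‖) := by
    rw [hsplit]
    have t1 : ‖(inner (𝕜 := ℂ) (u - Φq) (A Φq) : ℂ)‖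
        ≤ ((2 * c₀ * m) * ‖dOp ω q‖) * (‖A‖ * (c₀ * ‖q‖)) :=
      le_trans (norm_inner_le_norm _ _)
        (mul_le_mul B1 B3 (norm_nonneg _)
          (mul_nonneg (mul_nonneg (mul_nonneg (by norm_num) hc₀) hm0) hW))
    have t2 : ‖(inner (𝕜 := ℂ) (Φq - q) (A Φq) : ℂ)‖
        ≤ ((M * m) * ‖dOp ω q‖) * (‖A‖ * (c₀ * ‖q‖)) :=
      le_trans (norm_inner_le_norm _ _)
        (mul_le_mul B2 B3 (norm_nonneg _)
          (mul_nonneg (mul_nonneg hM0 hm0) hW))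
    have t3 : ‖(inner (𝕜 := ℂ) q (A (Φq - q)) : ℂ)‖
        ≤ ‖q‖ * (‖A‖ * ((M * m) * ‖dOp ω q‖)) := by
      refine le_trans (norm_inner_le_norm _ _) (mul_le_mul_of_nonneg_left ?_ (norm_nonneg q))
      exact le_trans (A.le_opNorm _) (mul_le_mul_of_nonneg_left B2 (norm_nonneg A))
    calc ‖(inner (𝕜 := ℂ) (u - Φq) (A Φq) : ℂ) + inner (𝕜 := ℂ) (Φq - q) (A Φq)
          + inner (𝕜 := ℂ) q (A (Φq - q))‖
        ≤ ‖(inner (𝕜 := ℂ) (u - Φq) (A Φq) : ℂ)‖ + ‖(inner (𝕜 := ℂ) (Φq - q) (A Φq) : ℂ)‖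
          + ‖(inner (𝕜 := ℂ) q (A (Φq - q)) : ℂ)‖ := norm_add₃_le
      _ ≤ ((2 * c₀ * m) * ‖dOp ω q‖) * (‖A‖ * (c₀ * ‖q‖))
          + ((M * m) * ‖dOp ω q‖) * (‖A‖ * (c₀ * ‖q‖))
          + ‖q‖ * (‖A‖ * ((M * m) * ‖dOp ω q‖)) := by
            exact add_le_add (add_le_add t1 t2) t3
      _ = (2 * c₀ ^ 2 + (c₀ + 1) * M) * ‖A‖ * m * (‖q‖ * ‖dOp ω q‖) := by ring
  -- energy difference identity
  have hdiff : modEnergy h ω ψ₁ φ A q p - energy ω A q p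
      = (1 / 2) * ((inner (𝕜 := ℂ) u (A Φq)).re - (inner (𝕜 := ℂ) q (A q)).re)
        - (1 / 8) * h ^ 2 * ‖w‖ ^ 2 := by
    simp only [modEnergy, energy]
    rw [← hΦq, ← hu, ← hw]
    ring
  have hre : |(inner (𝕜 := ℂ) u (A Φq)).re - (inner (𝕜 := ℂ) q (A q)).re|
      ≤ ‖(inner (𝕜 := ℂ) u (A Φq)) - (inner (𝕜 := ℂ) q (A q))‖ := by
    rw [← Complex.sub_re]
    calc |((inner (𝕜 := ℂ) u (A Φq)) - (inner (𝕜 := ℂ) q (A q))).re|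
        ≤ ‖_‖ := Complex.abs_re_le_norm _
      _ = _ := rfl
  have hw2 : ‖w‖ ^ 2 ≤ (c₀ ^ 2 * ‖A‖ * ‖q‖) ^ 2 := pow_le_pow_left₀ (norm_nonneg _) B4 2
  rw [hdiff]
  have tri : |(1 / 2) * ((inner (𝕜 := ℂ) u (A Φq)).re - (inner (𝕜 := ℂ) q (A q)).re)
      - (1 / 8) * h ^ 2 * ‖w‖ ^ 2|
      ≤ (1 / 2) * |(inner (𝕜 := ℂ) u (A Φq)).re - (inner (𝕜 := ℂ) q (A q)).re|
        + (1 / 8) * h ^ 2 * ‖w‖ ^ 2 := by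
    refine le_trans (abs_sub _ _) ?_
    rw [abs_mul, abs_of_nonneg (by positivity : (0:ℝ) ≤ (1 / 8) * h ^ 2 * ‖w‖ ^ 2),
      abs_of_nonneg (by norm_num : (0:ℝ) ≤ 1 / 2)]
  refine le_trans tri ?_
  have s1 : (1 / 2) * |(inner (𝕜 := ℂ) u (A Φq)).re - (inner (𝕜 := ℂ) q (A q)).re|
      ≤ (1 / 2) * ((2 * c₀ ^ 2 + (c₀ + 1) * M) * ‖A‖ * m * (‖q‖ * ‖dOp ω q‖)) :=
    mul_le_mul_of_nonneg_left (le_trans hre hz) (by norm_num)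
  have s2 : (1 / 8) * h ^ 2 * ‖w‖ ^ 2 ≤ (1 / 8) * h ^ 2 * (c₀ ^ 2 * ‖A‖ * ‖q‖) ^ 2 :=
    mul_le_mul_of_nonneg_left hw2 (by positivity)
  calc (1 / 2) * |(inner (𝕜 := ℂ) u (A Φq)).re - (inner (𝕜 := ℂ) q (A q)).re|
        + (1 / 8) * h ^ 2 * ‖w‖ ^ 2
      ≤ (1 / 2) * ((2 * c₀ ^ 2 + (c₀ + 1) * M) * ‖A‖ * m * (‖q‖ * ‖dOp ω q‖))
        + (1 / 8) * h ^ 2 * (c₀ ^ 2 * ‖A‖ * ‖q‖) ^ 2 := add_le_add s1 s2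
    _ = (1 / 2) * (2 * c₀ ^ 2 + (c₀ + 1) * M) * ‖A‖ * m * ‖q‖ * ‖dOp ω q‖
        + (1 / 8) * c₀ ^ 4 * ‖A‖ ^ 2 * h ^ 2 * ‖q‖ ^ 2 := by ring
end

section
/- (Regularity of the numerical solution.) In the setting of the exact conservation of the modified energy (linear force g = −Aq, self-adjoint A, filters with ψ₁ = sinc·φ, |ψ₁| ≤ c₀, |φ| ≤ c₀, 0 < h ≤ 1), the numerical solution satisfies (1/2)‖Ω q_n‖² + (1/2)‖q̇_n‖² ≤ (1/2)‖Ω q_0‖² + (1/2)‖q̇_0‖² + (C̆ + Ĉh²)(‖q_0‖² + ‖q_n‖²) for all n ∈ ℕ, with C̆ = (1/2)c₀²‖A‖ and Ĉ = (1/8)c₀⁴‖A‖². -/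
open scoped BigOperators

lemma sin_eq_mul_sinc (x : ℝ) : Real.sin x = x * sinc x := by
  unfold sinc; split_ifs with h
  · simp [h]
  · field_simp

lemma pythag (x : ℝ) : Real.cos x ^ 2 + (x * sinc x) ^ 2 = 1 := by
  rw [← sin_eq_mul_sinc, ← Real.sin_sq_add_cos_sq x]; ring

lemma dOp_apply {d : ℕ} (f : Fin d → ℝ) (x : EuclideanSpace ℂ (Fin d)) (i : Fin d) :
    dOp f x i = (f i : ℂ) * x i := rfl

lemma norm_sq_eq {d : ℕ} (x : EuclideanSpace ℂ (Fin d)) :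
    ‖x‖ ^ 2 = ∑ i, Complex.normSq (x i) := by
  rw [EuclideanSpace.norm_eq, Real.sq_sqrt (by positivity)]
  refine Finset.sum_congr rfl fun i _ => ?_
  rw [← Complex.sq_norm]

lemma inner_re_eq {d : ℕ} (x y : EuclideanSpace ℂ (Fin d)) :
    (inner (𝕜 := ℂ) x y).re = ∑ i, ((starRingEnd ℂ) (x i) * y i).re := by
  rw [PiLp.inner_apply, Complex.re_sum]; simp only [RCLike.inner_apply']

lemma inner_dOp {d : ℕ} (f : Fin d → ℝ) (x y : EuclideanSpace ℂ (Fin d)) :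
    inner (𝕜 := ℂ) (dOp f x) y = inner (𝕜 := ℂ) x (dOp f y) := by
  rw [PiLp.inner_apply, PiLp.inner_apply]
  refine Finset.sum_congr rfl fun i _ => ?_
  simp [dOp, RCLike.inner_apply, map_mul, Complex.conj_ofReal]
  ring

noncomputable def Bop {d : ℕ} (h : ℝ) (ω : Fin d → ℝ) (φ : ℝ → ℝ)
    (A : EuclideanSpace ℂ (Fin d) →L[ℂ] EuclideanSpace ℂ (Fin d))
    (x : EuclideanSpace ℂ (Fin d)) : EuclideanSpace ℂ (Fin d) :=
  dOp (fun i => φ (h * ω i)) (A (dOp (fun i => φ (h * ω i)) x))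

lemma inner_Bop_symm {d : ℕ} (h : ℝ) (ω : Fin d → ℝ) (φ : ℝ → ℝ)
    (A : EuclideanSpace ℂ (Fin d) →L[ℂ] EuclideanSpace ℂ (Fin d))
    (hA : IsSelfAdjoint A) (x y : EuclideanSpace ℂ (Fin d)) :
    inner (𝕜 := ℂ) x (Bop h ω φ A y) = inner (𝕜 := ℂ) (Bop h ω φ A x) y := by
  have hs := (ContinuousLinearMap.isSelfAdjoint_iff_isSymmetric.mp hA)
  unfold Bop
  rw [← inner_dOp]
  have h2 := hs (dOp (fun i => φ (h * ω i)) x) (dOp (fun i => φ (h * ω i)) y)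
  simp only [ContinuousLinearMap.coe_coe] at h2
  rw [← h2, inner_dOp]

lemma modEnergy_eq {d : ℕ} (h : ℝ) (ω : Fin d → ℝ) (ψ₁ φ : ℝ → ℝ)
    (hfilter : ∀ ξ : ℝ, ψ₁ ξ = sinc ξ * φ ξ)
    (A : EuclideanSpace ℂ (Fin d) →L[ℂ] EuclideanSpace ℂ (Fin d))
    (x y : EuclideanSpace ℂ (Fin d)) :
    modEnergy h ω ψ₁ φ A x y
    = ∑ i, ((1/2) * (ω i)^2 * Complex.normSq (x i) + (1/2) * Complex.normSq (y i)
        + (1/2) * Real.cos (h * ω i) * ((starRingEnd ℂ) (x i) * Bop h ω φ A x i).re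
        - (1/8) * h^2 * sinc (h * ω i)^2 * Complex.normSq (Bop h ω φ A x i)) := by
  unfold modEnergy
  rw [norm_sq_eq, norm_sq_eq, norm_sq_eq, inner_re_eq]
  rw [Finset.mul_sum, Finset.mul_sum, Finset.mul_sum, Finset.mul_sum,
    ← Finset.sum_add_distrib, ← Finset.sum_add_distrib, ← Finset.sum_sub_distrib]
  refine Finset.sum_congr rfl fun i _ => ?_
  have h1 : (starRingEnd ℂ) (dOp (fun i => Real.cos (h * ω i)) (dOp (fun i => φ (h * ω i)) x) i)
      * (A (dOp (fun i => φ (h * ω i)) x)) i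
      = (Real.cos (h * ω i) : ℂ) * ((starRingEnd ℂ) (x i) * Bop h ω φ A x i) := by
    simp only [dOp_apply, Bop, map_mul, Complex.conj_ofReal]; ring
  rw [h1]
  simp only [dOp_apply, Bop, hfilter, Complex.ofReal_mul, Complex.normSq_mul,
    Complex.normSq_ofReal, Complex.re_ofReal_mul]
  ring

lemma stepQ_apply {d : ℕ} (h : ℝ) (ω : Fin d → ℝ) (ψ₁ φ : ℝ → ℝ)
    (hfilter : ∀ ξ : ℝ, ψ₁ ξ = sinc ξ * φ ξ)
    (A : EuclideanSpace ℂ (Fin d) →L[ℂ] EuclideanSpace ℂ (Fin d))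
    (q p : EuclideanSpace ℂ (Fin d)) (i : Fin d) :
    trigStepQ h ω ψ₁ φ A q p i
      = (Real.cos (h * ω i) : ℂ) * q i + ((h * sinc (h * ω i) : ℝ) : ℂ) * p i
        - ((h^2/2 * sinc (h * ω i)^2 : ℝ) : ℂ) * Bop h ω φ A q i := by
  simp only [trigStepQ, Bop, PiLp.add_apply, PiLp.smul_apply, PiLp.neg_apply, dOp_apply,
    hfilter, smul_eq_mul, Complex.real_smul]
  push_cast
  ring

lemma stepP_apply {d : ℕ} (h : ℝ) (ω : Fin d → ℝ) (ψ₁ φ : ℝ → ℝ)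
    (hfilter : ∀ ξ : ℝ, ψ₁ ξ = sinc ξ * φ ξ)
    (A : EuclideanSpace ℂ (Fin d) →L[ℂ] EuclideanSpace ℂ (Fin d))
    (q p : EuclideanSpace ℂ (Fin d)) (i : Fin d) :
    trigStepP h ω ψ₁ φ A q p i
      = ((-(h * ω i^2 * sinc (h * ω i)) : ℝ) : ℂ) * q i + (Real.cos (h * ω i) : ℂ) * p i
        - ((h/2 * Real.cos (h * ω i) * sinc (h * ω i) : ℝ) : ℂ) * Bop h ω φ A q i
        - ((h/2 * sinc (h * ω i) : ℝ) : ℂ) * Bop h ω φ A (trigStepQ h ω ψ₁ φ A q p) i := by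
  simp only [trigStepP, Bop, PiLp.add_apply, PiLp.smul_apply, PiLp.neg_apply, dOp_apply,
    hfilter, smul_eq_mul, Complex.real_smul, sin_eq_mul_sinc]
  push_cast
  ring

lemma step_conserve {d : ℕ} (h : ℝ) (ω : Fin d → ℝ) (ψ₁ φ : ℝ → ℝ)
    (hfilter : ∀ ξ : ℝ, ψ₁ ξ = sinc ξ * φ ξ)
    (A : EuclideanSpace ℂ (Fin d) →L[ℂ] EuclideanSpace ℂ (Fin d))
    (hA : IsSelfAdjoint A) (q p : EuclideanSpace ℂ (Fin d)) :
    modEnergy h ω ψ₁ φ A (trigStepQ h ω ψ₁ φ A q p) (trigStepP h ω ψ₁ φ A q p)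
      = modEnergy h ω ψ₁ φ A q p := by
  rw [modEnergy_eq h ω ψ₁ φ hfilter A, modEnergy_eq h ω ψ₁ φ hfilter A]
  set q1 := trigStepQ h ω ψ₁ φ A q p with hq1
  set p1 := trigStepP h ω ψ₁ φ A q p with hp1
  set b := Bop h ω φ A q with hb
  set b1 := Bop h ω φ A q1 with hb1
  have hq1i : ∀ i, q1 i = (Real.cos (h * ω i) : ℂ) * q i + ((h * sinc (h * ω i) : ℝ) : ℂ) * p i
      - ((h^2/2 * sinc (h * ω i)^2 : ℝ) : ℂ) * b i := fun i =>
    stepQ_apply h ω ψ₁ φ hfilter A q p i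
  have hp1i : ∀ i, p1 i = ((-(h * ω i^2 * sinc (h * ω i)) : ℝ) : ℂ) * q i
      + (Real.cos (h * ω i) : ℂ) * p i
      - ((h/2 * Real.cos (h * ω i) * sinc (h * ω i) : ℝ) : ℂ) * b i
      - ((h/2 * sinc (h * ω i) : ℝ) : ℂ) * b1 i := fun i =>
    stepP_apply h ω ψ₁ φ hfilter A q p i
  set X : Fin d → ℝ := fun i =>
    (1/2) * (ω i)^2 * Complex.normSq ((Real.cos (h * ω i) : ℂ) * q i
        + ((h * sinc (h * ω i) : ℝ) : ℂ) * p i - ((h^2/2 * sinc (h * ω i)^2 : ℝ) : ℂ) * b i)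
    + (1/2) * Complex.normSq (((-(h * ω i^2 * sinc (h * ω i)) : ℝ) : ℂ) * q i
        + (Real.cos (h * ω i) : ℂ) * p i
        - ((h/2 * Real.cos (h * ω i) * sinc (h * ω i) : ℝ) : ℂ) * b i) with hX
  have hmid : (inner (𝕜 := ℂ) q b1) = (inner (𝕜 := ℂ) b q1) :=
    inner_Bop_symm h ω φ A hA q q1
  calc
    ∑ i, ((1/2) * (ω i)^2 * Complex.normSq (q1 i) + (1/2) * Complex.normSq (p1 i)
        + (1/2) * Real.cos (h * ω i) * ((starRingEnd ℂ) (q1 i) * b1 i).re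
        - (1/8) * h^2 * sinc (h * ω i)^2 * Complex.normSq (b1 i))
      = (∑ i, X i) + ∑ i, ((1/2) * ((starRingEnd ℂ) (q i) * b1 i).re) := by
        rw [← Finset.sum_add_distrib]
        refine Finset.sum_congr rfl fun i _ => ?_
        rw [hq1i i, hp1i i, hX]
        simp only [map_add, map_sub, map_mul, Complex.conj_ofReal, Complex.normSq_apply,
          Complex.mul_re, Complex.mul_im, Complex.add_re, Complex.add_im, Complex.sub_re,
          Complex.sub_im, Complex.ofReal_re, Complex.ofReal_im, Complex.conj_re,
          Complex.conj_im]
        linear_combination ((1/2) * ((q i).re * (b1 i).re + (q i).im * (b1 i).im))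
          * pythag (h * ω i)
    _ = (∑ i, X i) + ∑ i, ((1/2) * ((starRingEnd ℂ) (b i) * q1 i).re) := by
        congr 1
        rw [← Finset.mul_sum, ← Finset.mul_sum, ← inner_re_eq, ← inner_re_eq, hmid]
    _ = ∑ i, (X i + (1/2) * ((starRingEnd ℂ) (b i) * q1 i).re) := by
        rw [← Finset.sum_add_distrib]
    _ = ∑ i, ((1/2) * (ω i)^2 * Complex.normSq (q i) + (1/2) * Complex.normSq (p i)
        + (1/2) * Real.cos (h * ω i) * ((starRingEnd ℂ) (q i) * b i).re
        - (1/8) * h^2 * sinc (h * ω i)^2 * Complex.normSq (b i)) := by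
        refine Finset.sum_congr rfl fun i _ => ?_
        rw [hq1i i, hX]
        simp only [map_add, map_sub, map_mul, Complex.conj_ofReal, Complex.normSq_apply,
          Complex.mul_re, Complex.mul_im, Complex.add_re, Complex.add_im, Complex.sub_re,
          Complex.sub_im, Complex.ofReal_re, Complex.ofReal_im, Complex.conj_re,
          Complex.conj_im]
        linear_combination (((1/2) * (ω i)^2 * ((q i).re^2 + (q i).im^2)
            + (1/2) * ((p i).re^2 + (p i).im^2)
            - (h/2) * sinc (h * ω i) * ((p i).re * (b i).re + (p i).im * (b i).im)
            + (h^2/8) * sinc (h * ω i)^2 * ((b i).re^2 + (b i).im^2)))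
          * pythag (h * ω i)

lemma dOp_dOp {d : ℕ} (f g : Fin d → ℝ) (x : EuclideanSpace ℂ (Fin d)) :
    dOp f (dOp g x) = dOp (fun i => f i * g i) x := by
  ext i
  simp [dOp_apply]
  ring

lemma dOp_norm_le {d : ℕ} (f : Fin d → ℝ) (M : ℝ) (hM0 : 0 ≤ M) (hM : ∀ i, |f i| ≤ M)
    (x : EuclideanSpace ℂ (Fin d)) : ‖dOp f x‖ ≤ M * ‖x‖ := by
  have h2 : ‖dOp f x‖ ^ 2 ≤ (M * ‖x‖) ^ 2 := by
    rw [norm_sq_eq]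
    have he : (M * ‖x‖) ^ 2 = ∑ i, M ^ 2 * Complex.normSq (x i) := by
      rw [mul_pow, norm_sq_eq, Finset.mul_sum]
    rw [he]
    refine Finset.sum_le_sum fun i _ => ?_
    rw [dOp_apply, Complex.normSq_mul, Complex.normSq_ofReal]
    have h3 := hM i
    have h4 : f i * f i ≤ M ^ 2 := by nlinarith [abs_nonneg (f i), sq_abs (f i)]
    nlinarith [Complex.normSq_nonneg (x i)]
  nlinarith [norm_nonneg (dOp f x), mul_nonneg hM0 (norm_nonneg x)]

lemma T3_bound {d : ℕ} (h : ℝ) (ω : Fin d → ℝ) (φ : ℝ → ℝ) (c₀ : ℝ) (hc₀ : 0 ≤ c₀)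
    (hφ : ∀ ξ : ℝ, |φ ξ| ≤ c₀)
    (A : EuclideanSpace ℂ (Fin d) →L[ℂ] EuclideanSpace ℂ (Fin d))
    (x : EuclideanSpace ℂ (Fin d)) :
    |(inner (𝕜 := ℂ) (dOp (fun i => Real.cos (h * ω i)) (dOp (fun i => φ (h * ω i)) x))
        (A (dOp (fun i => φ (h * ω i)) x))).re| ≤ c₀ ^ 2 * ‖A‖ * ‖x‖ ^ 2 := by
  have h1 : ‖dOp (fun i => Real.cos (h * ω i)) (dOp (fun i => φ (h * ω i)) x)‖ ≤ c₀ * ‖x‖ := by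
    rw [dOp_dOp]
    refine dOp_norm_le _ c₀ hc₀ (fun i => ?_) x
    rw [abs_mul]
    calc |Real.cos (h * ω i)| * |φ (h * ω i)| ≤ 1 * c₀ :=
          mul_le_mul (Real.abs_cos_le_one _) (hφ _) (abs_nonneg _) zero_le_one
      _ = c₀ := one_mul c₀
  have h2 : ‖dOp (fun i => φ (h * ω i)) x‖ ≤ c₀ * ‖x‖ := dOp_norm_le _ c₀ hc₀ (fun i => hφ _) x
  have h3 : ‖A (dOp (fun i => φ (h * ω i)) x)‖ ≤ ‖A‖ * (c₀ * ‖x‖) := by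
    calc ‖A (dOp (fun i => φ (h * ω i)) x)‖ ≤ ‖A‖ * ‖dOp (fun i => φ (h * ω i)) x‖ :=
          A.le_opNorm _
      _ ≤ ‖A‖ * (c₀ * ‖x‖) := by
          exact mul_le_mul_of_nonneg_left h2 (norm_nonneg A)
  calc |(inner (𝕜 := ℂ) (dOp (fun i => Real.cos (h * ω i)) (dOp (fun i => φ (h * ω i)) x))
        (A (dOp (fun i => φ (h * ω i)) x))).re|
      ≤ ‖(inner (𝕜 := ℂ) (dOp (fun i => Real.cos (h * ω i)) (dOp (fun i => φ (h * ω i)) x))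
        (A (dOp (fun i => φ (h * ω i)) x)))‖ := by
        exact Complex.abs_re_le_norm _
    _ ≤ ‖dOp (fun i => Real.cos (h * ω i)) (dOp (fun i => φ (h * ω i)) x)‖
        * ‖A (dOp (fun i => φ (h * ω i)) x)‖ := norm_inner_le_norm _ _
    _ ≤ c₀ ^ 2 * ‖A‖ * ‖x‖ ^ 2 := by
        nlinarith [norm_nonneg (dOp (fun i => Real.cos (h * ω i)) (dOp (fun i => φ (h * ω i)) x)),
          norm_nonneg (A (dOp (fun i => φ (h * ω i)) x)), norm_nonneg x, norm_nonneg A,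
          mul_nonneg hc₀ (norm_nonneg x)]

lemma T4_bound {d : ℕ} (h : ℝ) (ω : Fin d → ℝ) (ψ₁ φ : ℝ → ℝ) (c₀ : ℝ) (hc₀ : 0 ≤ c₀)
    (hψ : ∀ ξ : ℝ, |ψ₁ ξ| ≤ c₀) (hφ : ∀ ξ : ℝ, |φ ξ| ≤ c₀)
    (A : EuclideanSpace ℂ (Fin d) →L[ℂ] EuclideanSpace ℂ (Fin d))
    (x : EuclideanSpace ℂ (Fin d)) :
    ‖dOp (fun i => ψ₁ (h * ω i)) (A (dOp (fun i => φ (h * ω i)) x))‖ ^ 2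
      ≤ c₀ ^ 4 * ‖A‖ ^ 2 * ‖x‖ ^ 2 := by
  have h2 : ‖dOp (fun i => φ (h * ω i)) x‖ ≤ c₀ * ‖x‖ := dOp_norm_le _ c₀ hc₀ (fun i => hφ _) x
  have h3 : ‖A (dOp (fun i => φ (h * ω i)) x)‖ ≤ ‖A‖ * (c₀ * ‖x‖) :=
    le_trans (A.le_opNorm _) (mul_le_mul_of_nonneg_left h2 (norm_nonneg A))
  have h4 : ‖dOp (fun i => ψ₁ (h * ω i)) (A (dOp (fun i => φ (h * ω i)) x))‖
      ≤ c₀ * (‖A‖ * (c₀ * ‖x‖)) :=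
    le_trans (dOp_norm_le _ c₀ hc₀ (fun i => hψ _) _) (mul_le_mul_of_nonneg_left h3 hc₀)
  nlinarith [norm_nonneg (dOp (fun i => ψ₁ (h * ω i)) (A (dOp (fun i => φ (h * ω i)) x))),
    norm_nonneg x, norm_nonneg A, mul_nonneg hc₀ (norm_nonneg x),
    mul_nonneg (mul_nonneg hc₀ (norm_nonneg A)) (mul_nonneg hc₀ (norm_nonneg x))]

/-- Lemma 2, regularity of the numerical solution: in the setting of the exact
conservation of the modified energy,
`½‖Ωq_n‖² + ½‖q̇_n‖² ≤ ½‖Ωq_0‖² + ½‖q̇_0‖² + (C̆ + Ĉh²)(‖q_0‖² + ‖q_n‖²)`. -/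
theorem numerical_solution_regularity {d : ℕ} (h : ℝ) (hh0 : 0 < h) (hh1 : h ≤ 1)
    (ω : Fin d → ℝ) (hω : ∀ i, 0 ≤ ω i) (ψ₁ φ : ℝ → ℝ) (c₀ : ℝ)
    (hfilter : ∀ ξ : ℝ, ψ₁ ξ = sinc ξ * φ ξ)
    (hψ : ∀ ξ : ℝ, |ψ₁ ξ| ≤ c₀) (hφ : ∀ ξ : ℝ, |φ ξ| ≤ c₀)
    (A : EuclideanSpace ℂ (Fin d) →L[ℂ] EuclideanSpace ℂ (Fin d))
    (hA : IsSelfAdjoint A)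
    (q p : ℕ → EuclideanSpace ℂ (Fin d))
    (hq : ∀ n : ℕ, q (n + 1) = trigStepQ h ω ψ₁ φ A (q n) (p n))
    (hp : ∀ n : ℕ, p (n + 1) = trigStepP h ω ψ₁ φ A (q n) (p n)) :
    ∀ n : ℕ,
      (1 / 2) * ‖dOp ω (q n)‖ ^ 2 + (1 / 2) * ‖p n‖ ^ 2
        ≤ (1 / 2) * ‖dOp ω (q 0)‖ ^ 2 + (1 / 2) * ‖p 0‖ ^ 2
          + ((1 / 2) * c₀ ^ 2 * ‖A‖ + (1 / 8) * c₀ ^ 4 * ‖A‖ ^ 2 * h ^ 2)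
              * (‖q 0‖ ^ 2 + ‖q n‖ ^ 2) := by
  intro n
  have hc₀ : 0 ≤ c₀ := le_trans (abs_nonneg _) (hψ 0)
  have hcons : modEnergy h ω ψ₁ φ A (q n) (p n) = modEnergy h ω ψ₁ φ A (q 0) (p 0) := by
    induction n with
    | zero => rfl
    | succ n ih =>
        rw [hq n, hp n, step_conserve h ω ψ₁ φ hfilter A hA, ih]
  unfold modEnergy at hcons
  have hT3n := abs_le.mp (T3_bound h ω φ c₀ hc₀ hφ A (q n))
  have hT30 := abs_le.mp (T3_bound h ω φ c₀ hc₀ hφ A (q 0))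
  have hT4n := T4_bound h ω ψ₁ φ c₀ hc₀ hψ hφ A (q n)
  have hT40 := T4_bound h ω ψ₁ φ c₀ hc₀ hψ hφ A (q 0)
  have hT4n0 : (0:ℝ) ≤ ‖dOp (fun i => ψ₁ (h * ω i)) (A (dOp (fun i => φ (h * ω i)) (q n)))‖ ^ 2 :=
    sq_nonneg _
  have hT400 : (0:ℝ) ≤ ‖dOp (fun i => ψ₁ (h * ω i)) (A (dOp (fun i => φ (h * ω i)) (q 0)))‖ ^ 2 :=
    sq_nonneg _
  have hh2 : (0:ℝ) ≤ h ^ 2 := sq_nonneg h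
  have hq0 : (0:ℝ) ≤ ‖q 0‖ ^ 2 := sq_nonneg _
  have hqn : (0:ℝ) ≤ ‖q n‖ ^ 2 := sq_nonneg _
  have hAn : (0:ℝ) ≤ ‖A‖ := norm_nonneg A
  nlinarith [mul_nonneg (mul_nonneg (mul_nonneg (mul_nonneg (mul_nonneg hc₀ hc₀) (mul_nonneg hc₀ hc₀)) (mul_nonneg hAn hAn)) hh2) hq0,
    mul_nonneg (mul_nonneg (mul_nonneg (mul_nonneg (mul_nonneg hc₀ hc₀) (mul_nonneg hc₀ hc₀)) (mul_nonneg hAn hAn)) hh2) hqn]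
end
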